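/- Let X be a finite set with n elements and let Y be a block design on X with parameters (n, c, k, l) which is also a projection base, i.e. Y is partitioned into classes p_1, …, p_j, each of which is a partition of X into blocks of Y. Let f be a probability on X. If the partition p is chosen uniformly at random from p_1, …, p_j, then for every ε > 0, the event Σ_{y ∈ p} |f̄(y) − c/n| ≤ ε holds with probability at least 1 − (1/ε)·( (n·(n−c)/(c·(n−1))) · Σ_{x ∈ X} (f(x) − 1/n)² )^{1/2}. -/

import Mathlib

open Finset

private lemma aux_card_filter_one {α : Type*} (s : Finset α) (q : α → Prop) [DecidablePred q]
    (h : ∃! a, a ∈ s ∧ q a) : (s.filter q).card = 1 := by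
  obtain ⟨a, ⟨has, hqa⟩, hun⟩ := h
  rw [Finset.card_eq_one]
  refine ⟨a, ?_⟩
  ext b
  simp only [mem_filter, mem_singleton]
  exact ⟨fun hb => hun b hb, fun hb => hb ▸ ⟨has, hqa⟩⟩

private lemma aux_card_indicator {X : Type*} [Fintype X] [DecidableEq X] (y : Finset X) :
    y.card = ∑ x : X, if x ∈ y then 1 else 0 := by
  rw [← Finset.filter_univ_mem y, Finset.card_filter]; simp


/-- **Theorem 4.6: most partitions of a projection base give nearly uniform
projections.**  Let `Y` be a block design on `X` with parameters `(n, c, k, l)`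
which is also a projection base: `Y` is partitioned into classes
`p_1, …, p_j` (the elements of `parts`), each of which is a partition of `X`.
Let `f` be a probability on `X`.  If a partition `p` is chosen uniformly at
random among `p_1, …, p_j`, then for every `ε > 0` the event
`Σ_{y ∈ p} |f̄(y) − c/n| ≤ ε` has probability at least
`1 − (1/ε)·( (n(n−c)/(c(n−1))) · Σ_{x ∈ X} (f(x) − 1/n)² )^{1/2}`. -/
theorem projection_base_random_partition_nearly_uniform
    {X : Type*} [Fintype X] [DecidableEq X]
    (Y : Finset (Finset X)) (n c k l : ℕ)
    (hn : Fintype.card X = n) (hn2 : 2 ≤ n)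
    (hc : ∀ y ∈ Y, y.card = c)
    (hk : ∀ x : X, (Y.filter (fun y => x ∈ y)).card = k)
    (hl : ∀ x x' : X, x ≠ x' →
      (Y.filter (fun y => x ∈ y ∧ x' ∈ y)).card = l)
    (parts : Finset (Finset (Finset X))) (hparts : parts.Nonempty)
    (hsub : ∀ p ∈ parts, ∀ y ∈ p, y ∈ Y)
    (hYpart : ∀ y ∈ Y, ∃! p, p ∈ parts ∧ y ∈ p)
    (hXpart : ∀ p ∈ parts, ∀ x : X, ∃! y, y ∈ p ∧ x ∈ y)
    (f : X → ℝ) (hf0 : ∀ x, 0 ≤ f x) (hf1 : ∑ x : X, f x = 1)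
    (ε : ℝ) (hε : 0 < ε) :
    1 - (1 / ε) * Real.sqrt
        (((n : ℝ) * ((n : ℝ) - c) / (c * ((n : ℝ) - 1))) *
          ∑ x : X, (f x - 1 / (n : ℝ)) ^ 2)
      ≤ ((parts.filter (fun p =>
            ∑ y ∈ p, |(∑ x ∈ y, f x) - (c : ℝ) / n| ≤ ε)).card : ℝ)
          / (parts.card : ℝ) := by
  classical
  -- basic facts
  have hn0 : 0 < n := lt_of_lt_of_le two_pos hn2
  have hXne : Nonempty X := by rw [← Fintype.card_pos_iff, hn]; exact hn0
  obtain ⟨x0⟩ := hXne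
  obtain ⟨p0, hp0⟩ := hparts
  obtain ⟨y0, ⟨hy0p, hy0x⟩, -⟩ := hXpart p0 hp0 x0
  have hy0Y : y0 ∈ Y := hsub p0 hp0 y0 hy0p
  have hc1 : 1 ≤ c := by rw [← hc y0 hy0Y]; exact Finset.card_pos.mpr ⟨x0, hy0x⟩
  have hcn : c ≤ n := by
    rw [← hc y0 hy0Y, ← hn, ← Finset.card_univ]
    exact Finset.card_le_card (Finset.subset_univ _)
  have hk1 : 1 ≤ k := by
    rw [← hk x0]
    exact Finset.card_pos.mpr ⟨y0, Finset.mem_filter.mpr ⟨hy0Y, hy0x⟩⟩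
  have hnR : (0:ℝ) < n := by exact_mod_cast hn0
  have hcR : (0:ℝ) < c := by exact_mod_cast hc1
  have hcnR : (c:ℝ) ≤ n := by exact_mod_cast hcn
  have hn1R : (0:ℝ) < (n:ℝ) - 1 := by
    have h2 : (2:ℝ) ≤ n := by exact_mod_cast hn2
    linarith
  -- unique membership counts
  have hPone : ∀ y ∈ Y, (parts.filter (fun p => y ∈ p)).card = 1 := fun y hy =>
    aux_card_filter_one _ _ (hYpart y hy)
  have hpone : ∀ p ∈ parts, ∀ x : X, (p.filter (fun y => x ∈ y)).card = 1 := fun p hp x =>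
    aux_card_filter_one _ _ (hXpart p hp x)
  -- each class has n / c blocks
  have hpcard : ∀ p ∈ parts, c * p.card = n := by
    intro p hp
    have h2 : ∑ y ∈ p, y.card = n := by
      calc ∑ y ∈ p, y.card = ∑ y ∈ p, ∑ x : X, if x ∈ y then 1 else 0 :=
            Finset.sum_congr rfl fun y _ => aux_card_indicator y
        _ = ∑ x : X, ∑ y ∈ p, if x ∈ y then 1 else 0 := Finset.sum_comm
        _ = ∑ x : X, (p.filter (fun y => x ∈ y)).card :=
            Finset.sum_congr rfl fun x _ => (Finset.card_filter _ _).symm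
        _ = ∑ _x : X, 1 := Finset.sum_congr rfl fun x _ => hpone p hp x
        _ = n := by rw [Finset.sum_const, smul_eq_mul, mul_one, Finset.card_univ, hn]
    have h1 : ∑ y ∈ p, y.card = ∑ _y ∈ p, c :=
      Finset.sum_congr rfl fun y hy => hc y (hsub p hp y hy)
    rw [h1, Finset.sum_const, smul_eq_mul] at h2
    rw [mul_comm]; exact h2
  -- c * |Y| = n * k
  have hYcard : c * Y.card = n * k := by
    have h2 : ∑ y ∈ Y, y.card = n * k := by
      calc ∑ y ∈ Y, y.card = ∑ y ∈ Y, ∑ x : X, if x ∈ y then 1 else 0 :=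
            Finset.sum_congr rfl fun y _ => aux_card_indicator y
        _ = ∑ x : X, ∑ y ∈ Y, if x ∈ y then 1 else 0 := Finset.sum_comm
        _ = ∑ x : X, (Y.filter (fun y => x ∈ y)).card :=
            Finset.sum_congr rfl fun x _ => (Finset.card_filter _ _).symm
        _ = ∑ _x : X, k := Finset.sum_congr rfl fun x _ => hk x
        _ = n * k := by rw [Finset.sum_const, smul_eq_mul, Finset.card_univ, hn]
    have h1 : ∑ y ∈ Y, y.card = ∑ _y ∈ Y, c := Finset.sum_congr rfl fun y hy => hc y hy
    rw [h1, Finset.sum_const, smul_eq_mul] at h2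
    rw [mul_comm]; exact h2
  -- parts partition Y
  have hjY : ∑ p ∈ parts, p.card = Y.card := by
    calc ∑ p ∈ parts, p.card = ∑ p ∈ parts, ∑ y ∈ Y, if y ∈ p then 1 else 0 := by
          refine Finset.sum_congr rfl fun p hp => ?_
          have hYp : Y.filter (fun y => y ∈ p) = p := by
            ext y
            simp only [Finset.mem_filter]
            exact ⟨fun h => h.2, fun h => ⟨hsub p hp y h, h⟩⟩
          rw [← Finset.card_filter, hYp]
      _ = ∑ y ∈ Y, ∑ p ∈ parts, if y ∈ p then 1 else 0 := Finset.sum_comm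
      _ = ∑ y ∈ Y, (parts.filter (fun p => y ∈ p)).card :=
          Finset.sum_congr rfl fun y _ => (Finset.card_filter _ _).symm
      _ = ∑ _y ∈ Y, 1 := Finset.sum_congr rfl fun y hy => hPone y hy
      _ = Y.card := by rw [Finset.sum_const, smul_eq_mul, mul_one]
  -- j = k
  have hjk : parts.card = k := by
    have h1 : c * ∑ p ∈ parts, p.card = ∑ p ∈ parts, n := by
      rw [Finset.mul_sum]
      exact Finset.sum_congr rfl fun p hp => hpcard p hp
    rw [hjY, hYcard, Finset.sum_const, smul_eq_mul] at h1
    exact Nat.eq_of_mul_eq_mul_right hn0 (h1.symm.trans (mul_comm n k))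
  -- pair counting: k * (c-1) = l * (n-1)
  have hpair : k * (c - 1) = l * (n - 1) := by
    have h1 : ∑ y ∈ Y.filter (fun y => x0 ∈ y), (y.erase x0).card = k * (c - 1) := by
      have : ∀ y ∈ Y.filter (fun y => x0 ∈ y), (y.erase x0).card = c - 1 := by
        intro y hy
        obtain ⟨hyY, hxy⟩ := Finset.mem_filter.mp hy
        rw [Finset.card_erase_of_mem hxy, hc y hyY]
      rw [Finset.sum_congr rfl this, Finset.sum_const, smul_eq_mul, hk x0]
    have h2 : ∑ y ∈ Y.filter (fun y => x0 ∈ y), (y.erase x0).card = (n - 1) * l := by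
      calc ∑ y ∈ Y.filter (fun y => x0 ∈ y), (y.erase x0).card
          = ∑ y ∈ Y.filter (fun y => x0 ∈ y), ∑ x' ∈ univ.erase x0, if x' ∈ y then 1 else 0 := by
            refine Finset.sum_congr rfl fun y hy => ?_
            rw [← Finset.card_filter]
            congr 1
            ext x'
            simp only [Finset.mem_erase, Finset.mem_filter, Finset.mem_univ, true_and]
            tauto
        _ = ∑ x' ∈ univ.erase x0, ∑ y ∈ Y.filter (fun y => x0 ∈ y), if x' ∈ y then 1 else 0 :=
            Finset.sum_comm
        _ = ∑ x' ∈ univ.erase x0, ((Y.filter (fun y => x0 ∈ y)).filter (fun y => x' ∈ y)).card :=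
            Finset.sum_congr rfl fun x' _ => (Finset.card_filter _ _).symm
        _ = ∑ x' ∈ univ.erase x0, l := by
            refine Finset.sum_congr rfl fun x' hx' => ?_
            rw [Finset.filter_filter]
            exact hl x0 x' (Ne.symm (Finset.mem_erase.mp hx').1)
        _ = (n - 1) * l := by
            rw [Finset.sum_const, smul_eq_mul, Finset.card_erase_of_mem (Finset.mem_univ _),
              Finset.card_univ, hn]
    rw [h1] at h2
    rw [h2, Nat.mul_comm]
  -- real versions of the counting identities
  have hYcR : (c:ℝ) * Y.card = (n:ℝ) * k := by exact_mod_cast hYcard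
  have hpairR : (k:ℝ) * ((c:ℝ) - 1) = (l:ℝ) * ((n:ℝ) - 1) := by
    have h := hpair
    zify [hc1, show 1 ≤ n from le_trans one_le_two hn2] at h
    exact_mod_cast h
  -- the centered function sums to zero
  have hesum : ∑ x : X, (f x - 1 / (n:ℝ)) = 0 := by
    rw [Finset.sum_sub_distrib, hf1, Finset.sum_const, Finset.card_univ, hn, nsmul_eq_mul]
    field_simp
    ring
  -- Radon transform deviation
  have hgy : ∀ y ∈ Y, (∑ x ∈ y, f x) - (c:ℝ)/n = ∑ x ∈ y, (f x - 1 / (n:ℝ)) := by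
    intro y hy
    rw [Finset.sum_sub_distrib, Finset.sum_const, hc y hy, nsmul_eq_mul]
    ring
  -- KEY identity : sum of squared deviations over Y
  have hkey : ∑ y ∈ Y, (∑ x ∈ y, (f x - 1 / (n:ℝ))) ^ 2
      = ((k:ℝ) - l) * ∑ x : X, (f x - 1 / (n:ℝ)) ^ 2 := by
    have step1 : ∀ y : Finset X, (∑ x ∈ y, (f x - 1 / (n:ℝ))) ^ 2
        = ∑ x : X, ∑ x' : X,
            (if x ∈ y ∧ x' ∈ y then (f x - 1/(n:ℝ)) * (f x' - 1/(n:ℝ)) else 0) := by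
      intro y
      have hy1 : ∑ x ∈ y, (f x - 1 / (n:ℝ))
          = ∑ x : X, (if x ∈ y then f x - 1/(n:ℝ) else 0) := by
        rw [Finset.sum_ite_mem, Finset.univ_inter]
      rw [sq, hy1, Finset.sum_mul_sum]
      refine Finset.sum_congr rfl fun x _ => Finset.sum_congr rfl fun x' _ => ?_
      by_cases h1 : x ∈ y <;> by_cases h2 : x' ∈ y <;> simp [h1, h2]
    have step2 : ∑ y ∈ Y, (∑ x ∈ y, (f x - 1 / (n:ℝ))) ^ 2
        = ∑ x : X, ∑ x' : X, ((Y.filter (fun y => x ∈ y ∧ x' ∈ y)).card : ℝ)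
            * ((f x - 1/(n:ℝ)) * (f x' - 1/(n:ℝ))) := by
      rw [Finset.sum_congr rfl fun y _ => step1 y, Finset.sum_comm]
      refine Finset.sum_congr rfl fun x _ => ?_
      rw [Finset.sum_comm]
      refine Finset.sum_congr rfl fun x' _ => ?_
      rw [← Finset.sum_filter, Finset.sum_const, nsmul_eq_mul]
    rw [step2]
    have diag : ∀ x : X, ((Y.filter (fun y => x ∈ y ∧ x ∈ y)).card : ℝ) = k := by
      intro x
      have : Y.filter (fun y => x ∈ y ∧ x ∈ y) = Y.filter (fun y => x ∈ y) := by
        simp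
      rw [this, hk x]
    calc ∑ x : X, ∑ x' : X, ((Y.filter (fun y => x ∈ y ∧ x' ∈ y)).card : ℝ)
            * ((f x - 1/(n:ℝ)) * (f x' - 1/(n:ℝ)))
        = ∑ x : X, ((k:ℝ) * ((f x - 1/(n:ℝ)) * (f x - 1/(n:ℝ)))
            + ∑ x' ∈ univ.erase x, (l:ℝ) * ((f x - 1/(n:ℝ)) * (f x' - 1/(n:ℝ)))) := by
          refine Finset.sum_congr rfl fun x _ => ?_
          rw [← Finset.add_sum_erase _ _ (Finset.mem_univ x), diag x]
          congr 1
          refine Finset.sum_congr rfl fun x' hx' => ?_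
          rw [hl x x' (Ne.symm (Finset.mem_erase.mp hx').1)]
      _ = ∑ x : X, ((k:ℝ) - l) * (f x - 1/(n:ℝ)) ^ 2 := by
          refine Finset.sum_congr rfl fun x _ => ?_
          have herase : ∑ x' ∈ univ.erase x, (f x' - 1/(n:ℝ))
              = 0 - (f x - 1/(n:ℝ)) := by
            rw [Finset.sum_erase_eq_sub (Finset.mem_univ x), hesum]
          have : ∑ x' ∈ univ.erase x, (l:ℝ) * ((f x - 1/(n:ℝ)) * (f x' - 1/(n:ℝ)))
              = (l:ℝ) * (f x - 1/(n:ℝ)) * (0 - (f x - 1/(n:ℝ))) := by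
            rw [← herase, Finset.mul_sum]
            exact Finset.sum_congr rfl fun x' _ => by ring
          rw [this]; ring
      _ = ((k:ℝ) - l) * ∑ x : X, (f x - 1 / (n:ℝ)) ^ 2 := by rw [← Finset.mul_sum]
  -- abbreviation facts
  have hE0 : (0:ℝ) ≤ ∑ x : X, (f x - 1 / (n:ℝ)) ^ 2 :=
    Finset.sum_nonneg fun x _ => sq_nonneg _
  have hjpos : (0:ℝ) < parts.card := by
    exact_mod_cast Finset.card_pos.mpr ⟨p0, hp0⟩
  have hArg0 : (0:ℝ) ≤ ((n : ℝ) * ((n : ℝ) - c) / (c * ((n : ℝ) - 1))) *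
      ∑ x : X, (f x - 1 / (n : ℝ)) ^ 2 := by
    apply mul_nonneg _ hE0
    apply div_nonneg (mul_nonneg hnR.le (by linarith)) (mul_nonneg hcR.le hn1R.le)
  -- the factorization
  have hfactor : (Y.card : ℝ) * (((k:ℝ) - l) * ∑ x : X, (f x - 1 / (n:ℝ)) ^ 2)
      = (parts.card:ℝ)^2 * (((n : ℝ) * ((n : ℝ) - c) / (c * ((n : ℝ) - 1))) *
          ∑ x : X, (f x - 1 / (n : ℝ)) ^ 2) := by
    rw [hjk]
    have hY' : (Y.card:ℝ) = n * k / c := by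
      field_simp
      linarith [hYcR]
    have hl' : (l:ℝ) = k * ((c:ℝ) - 1) / ((n:ℝ) - 1) := by
      field_simp
      linarith [hpairR]
    rw [hY', hl']
    field_simp
    ring
  -- the sum over all partitions equals the sum over Y
  have hsplitsum : ∑ p ∈ parts, ∑ y ∈ p, |(∑ x ∈ y, f x) - (c : ℝ) / n|
      = ∑ y ∈ Y, |∑ x ∈ y, (f x - 1 / (n:ℝ))| := by
    calc ∑ p ∈ parts, ∑ y ∈ p, |(∑ x ∈ y, f x) - (c : ℝ) / n|
        = ∑ p ∈ parts, ∑ y ∈ Y, (if y ∈ p then |(∑ x ∈ y, f x) - (c : ℝ) / n| else 0) := by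
          refine Finset.sum_congr rfl fun p hp => ?_
          rw [Finset.sum_ite_mem, Finset.inter_eq_right.mpr (fun y hy => hsub p hp y hy)]
      _ = ∑ y ∈ Y, ∑ p ∈ parts, (if y ∈ p then |(∑ x ∈ y, f x) - (c : ℝ) / n| else 0) :=
          Finset.sum_comm
      _ = ∑ y ∈ Y, |∑ x ∈ y, (f x - 1 / (n:ℝ))| := by
          refine Finset.sum_congr rfl fun y hy => ?_
          rw [← Finset.sum_filter, Finset.sum_const, hPone y hy, one_nsmul, hgy y hy]
  -- Cauchy-Schwarz
  have hCS : ∑ y ∈ Y, |∑ x ∈ y, (f x - 1 / (n:ℝ))|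
      ≤ Real.sqrt ((Y.card : ℝ) * ∑ y ∈ Y, (∑ x ∈ y, (f x - 1 / (n:ℝ))) ^ 2) := by
    rw [Real.le_sqrt (Finset.sum_nonneg fun _ _ => abs_nonneg _) (mul_nonneg (Nat.cast_nonneg _) (Finset.sum_nonneg fun _ _ => sq_nonneg _))]
    calc (∑ y ∈ Y, |∑ x ∈ y, (f x - 1 / (n:ℝ))|) ^ 2
        ≤ (Y.card : ℝ) * ∑ y ∈ Y, |∑ x ∈ y, (f x - 1 / (n:ℝ))| ^ 2 :=
          sq_sum_le_card_mul_sum_sq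
      _ = (Y.card : ℝ) * ∑ y ∈ Y, (∑ x ∈ y, (f x - 1 / (n:ℝ))) ^ 2 := by
          simp [sq_abs]
  have hsqrt : Real.sqrt ((Y.card : ℝ) * ∑ y ∈ Y, (∑ x ∈ y, (f x - 1 / (n:ℝ))) ^ 2)
      = (parts.card : ℝ) * Real.sqrt (((n : ℝ) * ((n : ℝ) - c) / (c * ((n : ℝ) - 1))) *
          ∑ x : X, (f x - 1 / (n : ℝ)) ^ 2) := by
    rw [hkey, hfactor, Real.sqrt_mul (sq_nonneg _), Real.sqrt_sq hjpos.le]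
  -- Markov
  have hMarkov : ε * ((parts.filter (fun p =>
        ¬ (∑ y ∈ p, |(∑ x ∈ y, f x) - (c : ℝ) / n| ≤ ε))).card : ℝ)
      ≤ ∑ p ∈ parts, ∑ y ∈ p, |(∑ x ∈ y, f x) - (c : ℝ) / n| := by
    calc ε * ((parts.filter (fun p =>
            ¬ (∑ y ∈ p, |(∑ x ∈ y, f x) - (c : ℝ) / n| ≤ ε))).card : ℝ)
        = ∑ _p ∈ parts.filter (fun p =>
            ¬ (∑ y ∈ p, |(∑ x ∈ y, f x) - (c : ℝ) / n| ≤ ε)), ε := by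
          rw [Finset.sum_const, nsmul_eq_mul, mul_comm]
      _ ≤ ∑ p ∈ parts.filter (fun p =>
            ¬ (∑ y ∈ p, |(∑ x ∈ y, f x) - (c : ℝ) / n| ≤ ε)),
            ∑ y ∈ p, |(∑ x ∈ y, f x) - (c : ℝ) / n| :=
          Finset.sum_le_sum fun p hp =>
            (not_le.mp (Finset.mem_filter.mp hp).2).le
      _ ≤ ∑ p ∈ parts, ∑ y ∈ p, |(∑ x ∈ y, f x) - (c : ℝ) / n| :=
          Finset.sum_le_sum_of_subset_of_nonneg (Finset.filter_subset _ _)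
            (fun p _ _ => Finset.sum_nonneg fun y _ => abs_nonneg _)
  have hbound : ε * ((parts.filter (fun p =>
        ¬ (∑ y ∈ p, |(∑ x ∈ y, f x) - (c : ℝ) / n| ≤ ε))).card : ℝ)
      ≤ (parts.card : ℝ) * Real.sqrt (((n : ℝ) * ((n : ℝ) - c) / (c * ((n : ℝ) - 1))) *
          ∑ x : X, (f x - 1 / (n : ℝ)) ^ 2) :=
    hMarkov.trans (by rw [hsplitsum, ← hsqrt]; exact hCS)
  -- finish
  have hcards : ((parts.filter (fun p =>
        ∑ y ∈ p, |(∑ x ∈ y, f x) - (c : ℝ) / n| ≤ ε)).card : ℝ)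
      = (parts.card : ℝ) - ((parts.filter (fun p =>
        ¬ (∑ y ∈ p, |(∑ x ∈ y, f x) - (c : ℝ) / n| ≤ ε))).card : ℝ) := by
    have := Finset.card_filter_add_card_filter_not
      (s := parts) (p := fun p => ∑ y ∈ p, |(∑ x ∈ y, f x) - (c : ℝ) / n| ≤ ε)
    push_cast [← this]
    ring
  rw [hcards]
  have hS0 : (0:ℝ) ≤ Real.sqrt (((n : ℝ) * ((n : ℝ) - c) / (c * ((n : ℝ) - 1))) *
      ∑ x : X, (f x - 1 / (n : ℝ)) ^ 2) := Real.sqrt_nonneg _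
  rw [sub_div, div_self hjpos.ne']
  apply sub_le_sub_left
  rw [div_le_iff₀ hjpos]
  calc ((parts.filter (fun p =>
          ¬ (∑ y ∈ p, |(∑ x ∈ y, f x) - (c : ℝ) / n| ≤ ε))).card : ℝ)
      = (ε * ((parts.filter (fun p =>
          ¬ (∑ y ∈ p, |(∑ x ∈ y, f x) - (c : ℝ) / n| ≤ ε))).card : ℝ)) / ε := by
        rw [mul_div_cancel_left₀ _ hε.ne']
    _ ≤ ((parts.card : ℝ) * Real.sqrt (((n : ℝ) * ((n : ℝ) - c) / (c * ((n : ℝ) - 1))) *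
          ∑ x : X, (f x - 1 / (n : ℝ)) ^ 2)) / ε := (div_le_div_iff_of_pos_right hε).mpr hbound
    _ = 1 / ε * Real.sqrt (((n : ℝ) * ((n : ℝ) - c) / (c * ((n : ℝ) - 1))) *
          ∑ x : X, (f x - 1 / (n : ℝ)) ^ 2) * (parts.card : ℝ) := by ring
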